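/- arXiv:2312.04550 — 2 statements merged into one kernel-verified Lean document; each statement's English description precedes it below -/
import Mathlib

section
/- Let (Ω, 𝓕, ℙ) be a probability space, σ : Ω → Ω a ℙ-preserving transformation, q > 0, and B : Ω → [0,∞) with B ∈ L^q(ℙ). Then for every sequence of positive numbers (a_n)_{n≥1} with Σ_{n≥1} a_n^q < ∞ there exists a random variable R ∈ L^q(ℙ) such that B(σⁿω) ≤ R(ω)·a_n^{−1} for ℙ-a.e. ω ∈ Ω and all n ≥ 1, and moreover ‖R‖_{L^q(ℙ)}^q ≤ ‖B‖_{L^q(ℙ)}^q · Σ_{n≥1} a_n^q. -/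
open MeasureTheory Filter
open scoped ENNReal NNReal

noncomputable section

/-- **Tempering lemma.** If `B ∈ L^q(ℙ)` and `Σ aₙ^q < ∞`, then there is `R ∈ L^q(ℙ)` with
`B(σⁿω) ≤ R(ω)·aₙ⁻¹` a.e. and `‖R‖_q^q ≤ ‖B‖_q^q · Σ aₙ^q`. -/
theorem tempering_lemma
    {Ω : Type*} [MeasurableSpace Ω]
    (ℙ : Measure Ω) [IsProbabilityMeasure ℙ]
    (σ : Ω → Ω) (hσ : MeasurePreserving σ ℙ ℙ)
    (q : ℝ) (hq : 0 < q)
    (B : Ω → ℝ) (hB0 : ∀ ω, 0 ≤ B ω) (hBmeas : Measurable B)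
    (hBq : MemLp B (ENNReal.ofReal q) ℙ)
    (a : ℕ → ℝ) (ha : ∀ n : ℕ, 1 ≤ n → 0 < a n)
    (hasum : Summable fun n : ℕ => a (n + 1) ^ q) :
    ∃ R : Ω → ℝ, MemLp R (ENNReal.ofReal q) ℙ ∧
      (∀ᵐ ω ∂ℙ, ∀ n : ℕ, 1 ≤ n → B (σ^[n] ω) ≤ R ω * (a n)⁻¹) ∧
      eLpNorm R (ENNReal.ofReal q) ℙ ^ q
        ≤ eLpNorm B (ENNReal.ofReal q) ℙ ^ q * ENNReal.ofReal (∑' n : ℕ, a (n + 1) ^ q) := by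
  set p : ℝ≥0∞ := ENNReal.ofReal q with hp
  have hpq : p.toReal = q := ENNReal.toReal_ofReal hq.le
  have hp0 : p ≠ 0 := by
    simp [hp, ENNReal.ofReal_eq_zero, not_le, hq]
  have hpt : p ≠ ⊤ := ENNReal.ofReal_ne_top
  -- the summand functions and their sum
  set g : ℕ → Ω → ℝ≥0∞ := fun n ω =>
    ENNReal.ofReal (a (n + 1)) ^ q * ENNReal.ofReal (B (σ^[n + 1] ω)) ^ q with hg
  set S : Ω → ℝ≥0∞ := fun ω => ∑' n, g n ω with hS
  have hgmeas : ∀ n, Measurable (g n) := by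
    intro n
    exact (((hBmeas.comp (hσ.measurable.iterate (n + 1))).ennreal_ofReal.pow_const q).const_mul _)
  have hSmeas : Measurable S := Measurable.ennreal_tsum hgmeas
  -- nnnorm of B as ofReal
  have hBo : ∀ ω, (‖B ω‖₊ : ℝ≥0∞) = ENNReal.ofReal (B ω) := by
    intro ω
    rw [← enorm_eq_nnnorm, ← ofReal_norm, Real.norm_of_nonneg (hB0 ω)]
  -- the integral of B^q
  set I : ℝ≥0∞ := ∫⁻ ω, ENNReal.ofReal (B ω) ^ q ∂ℙ with hI
  have hIsn : eLpNorm B p ℙ ^ q = I := by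
    rw [eLpNorm_eq_lintegral_rpow_enorm_toReal hp0 hpt, hpq, ← ENNReal.rpow_mul,
      one_div_mul_cancel hq.ne', ENNReal.rpow_one]
    simp only [hI, enorm_eq_nnnorm, hBo]
  -- integral of S
  have hintS : ∫⁻ ω, S ω ∂ℙ = ENNReal.ofReal (∑' n, a (n + 1) ^ q) * I := by
    rw [hS]
    rw [lintegral_tsum fun n => (hgmeas n).aemeasurable]
    have hcomp : ∀ n : ℕ, ∫⁻ ω, g n ω ∂ℙ = ENNReal.ofReal (a (n + 1)) ^ q * I := by
      intro n
      have hm : Measurable fun ω => ENNReal.ofReal (B (σ^[n + 1] ω)) ^ q :=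
        (hBmeas.comp (hσ.measurable.iterate (n + 1))).ennreal_ofReal.pow_const q
      rw [hg]
      simp only
      rw [lintegral_const_mul _ hm]
      congr 1
      exact (hσ.iterate (n + 1)).lintegral_comp (hBmeas.ennreal_ofReal.pow_const q)
    simp only [hcomp]
    rw [ENNReal.tsum_mul_right]
    congr 1
    rw [ENNReal.ofReal_tsum_of_nonneg (fun n => Real.rpow_nonneg (ha (n + 1) (by omega)).le q) hasum]
    congr 1
    ext n
    exact ENNReal.ofReal_rpow_of_nonneg (ha (n + 1) (by omega)).le hq.le
  have hIlt : I < ⊤ := by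
    rw [← hIsn]
    exact ENNReal.rpow_lt_top_of_nonneg hq.le hBq.2.ne
  have hintSlt : ∫⁻ ω, S ω ∂ℙ ≠ ⊤ := by
    rw [hintS]
    exact (ENNReal.mul_lt_top ENNReal.ofReal_lt_top hIlt).ne
  have hfin : ∀ᵐ ω ∂ℙ, S ω < ⊤ := ae_lt_top hSmeas hintSlt
  -- define R
  set R : Ω → ℝ := fun ω => (S ω ^ (1 / q)).toReal with hR
  have hRmeas : Measurable R := (hSmeas.pow_const _).ennreal_toReal
  -- key a.e. identity: ofReal (R ω) ^ q = S ω when S ω < ⊤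
  have hkey : ∀ ω, S ω < ⊤ → ENNReal.ofReal (R ω) = S ω ^ (1 / q) := by
    intro ω hω
    rw [hR]
    simp only
    rw [ENNReal.ofReal_toReal]
    exact (ENNReal.rpow_lt_top_of_nonneg (by positivity) hω.ne).ne
  have hkeyq : ∀ᵐ ω ∂ℙ, (‖R ω‖₊ : ℝ≥0∞) ^ q = S ω := by
    filter_upwards [hfin] with ω hω
    rw [← enorm_eq_nnnorm, ← ofReal_norm, Real.norm_of_nonneg ENNReal.toReal_nonneg,
      hkey ω hω, ← ENNReal.rpow_mul, one_div_mul_cancel hq.ne', ENNReal.rpow_one]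
  -- the norm bound
  have hRint : ∫⁻ ω, (‖R ω‖₊ : ℝ≥0∞) ^ q ∂ℙ = ENNReal.ofReal (∑' n, a (n + 1) ^ q) * I := by
    rw [lintegral_congr_ae hkeyq, hintS]
  have hRsn : eLpNorm R p ℙ ^ q = ENNReal.ofReal (∑' n, a (n + 1) ^ q) * I := by
    rw [eLpNorm_eq_lintegral_rpow_enorm_toReal hp0 hpt, hpq, ← ENNReal.rpow_mul,
      one_div_mul_cancel hq.ne', ENNReal.rpow_one]
    simp only [enorm_eq_nnnorm, hRint]
  have hRlt : eLpNorm R p ℙ < ⊤ := by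
    rw [← ENNReal.rpow_lt_top_iff_of_pos hq, hRsn]
    exact ENNReal.mul_lt_top ENNReal.ofReal_lt_top hIlt
  refine ⟨R, ⟨hRmeas.aestronglyMeasurable, hRlt⟩, ?_, ?_⟩
  · -- a.e. domination
    filter_upwards [hfin] with ω hω n hn
    have han : 0 < a n := ha n hn
    obtain ⟨m, rfl⟩ : ∃ m, n = m + 1 := ⟨n - 1, by omega⟩
    have hterm : g m ω ≤ S ω := ENNReal.le_tsum m
    rw [hg] at hterm
    simp only at hterm
    have h1 : (ENNReal.ofReal (a (m + 1)) * ENNReal.ofReal (B (σ^[m + 1] ω))) ^ q ≤ S ω := by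
      rw [ENNReal.mul_rpow_of_nonneg _ _ hq.le]
      exact hterm
    have h2 := ENNReal.rpow_le_rpow h1 (by positivity : (0:ℝ) ≤ 1 / q)
    rw [← ENNReal.rpow_mul, mul_one_div_cancel hq.ne', ENNReal.rpow_one,
      ← ENNReal.ofReal_mul han.le] at h2
    have h3 := ENNReal.toReal_mono
      (ENNReal.rpow_lt_top_of_nonneg (by positivity) hω.ne).ne h2
    rw [ENNReal.toReal_ofReal (mul_nonneg han.le (hB0 _))] at h3
    have hR3 : a (m + 1) * B (σ^[m + 1] ω) ≤ R ω := h3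
    rw [← div_eq_mul_inv, le_div_iff₀ han]
    linarith [hR3]
  · rw [hRsn, ← hIsn, mul_comm]
end
end

section
/- Suppose limsup_{k→∞} ψ_U(k) < 1/𝔼_ℙ[ρ] − 1, where 𝔼_ℙ[ρ] = ∫_Ω ρ dℙ < 1. Assume further that there are positive numbers β_r with β_r → 0 and random variables ρ_r : Ω → (0,∞), each ρ_r measurable with respect to σ{X_j : |j| ≤ r}, such that ‖ρ − ρ_r‖_{L^∞(ℙ)} ≤ β_r for every r. Then for every q ≥ 1 there exists δ = δ_q ∈ (0,1) such that ‖ρ_{ω,n}‖_{L^q(ℙ)} ≤ δⁿ for all n ≥ 1, where ρ_{ω,n} := Π_{j=0}^{n−1} ρ(σ^j ω). -/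
open MeasureTheory Filter
open scoped ENNReal NNReal

noncomputable section

section AuxRho

variable {Ω S : Type*} [MeasurableSpace S]

omit [MeasurableSpace S] in
lemma aux_Xshift_iter (σ : Ω → Ω) (X : ℤ → Ω → S)
    (hXshift : ∀ (j : ℤ) (ω : Ω), X j (σ ω) = X (j + 1) ω) :
    ∀ (t : ℕ) (j : ℤ) (ω : Ω), X j (σ^[t] ω) = X (j + t) ω := by
  intro t
  induction t with
  | zero => intro j ω; simp
  | succ t ih =>
    intro j ω
    rw [Function.iterate_succ_apply, ih j (σ ω), hXshift]
    congr 1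
    push_cast
    ring

lemma aux_shift_preimage (σ : Ω → Ω) (X : ℤ → Ω → S)
    (hXshift : ∀ (j : ℤ) (ω : Ω), X j (σ ω) = X (j + 1) ω)
    (r t : ℕ) (tgt : MeasurableSpace Ω)
    (h : ∀ j : ℤ, |j| ≤ (r : ℤ) →
      MeasurableSpace.comap (X (j + t)) inferInstance ≤ tgt)
    {B : Set Ω}
    (hB : MeasurableSet[⨆ (j : ℤ) (_ : |j| ≤ (r : ℤ)),
      MeasurableSpace.comap (X j) inferInstance] B) :
    MeasurableSet[tgt] (σ^[t] ⁻¹' B) := by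
  have hmeas : @Measurable Ω Ω tgt
      (⨆ (j : ℤ) (_ : |j| ≤ (r : ℤ)), MeasurableSpace.comap (X j) inferInstance) (σ^[t]) := by
    rw [measurable_iff_comap_le, MeasurableSpace.comap_iSup]
    refine iSup_le fun j => ?_
    rw [MeasurableSpace.comap_iSup]
    refine iSup_le fun hj => ?_
    rw [MeasurableSpace.comap_comp]
    have hfun : X j ∘ σ^[t] = X (j + t) := funext (aux_Xshift_iter σ X hXshift t j)
    rw [hfun]
    exact h j hj
  exact hmeas hB

lemma aux_iter_mix [MeasurableSpace Ω] (ℙ : Measure Ω)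
    (past fut : ℤ → MeasurableSpace Ω)
    (Ψ pR : ℝ) (hΨ : 0 ≤ 1 + Ψ)
    (C : ℕ → Set Ω) (L r : ℕ)
    (hmix : ∀ (s : ℤ) (A B : Set Ω), MeasurableSet[past s] A → MeasurableSet[fut (s+1)] B →
      (ℙ (A ∩ B)).toReal ≤ (ℙ A).toReal * (ℙ B).toReal * (1 + Ψ))
    (hpast_mono : Monotone past)
    (hCpast : ∀ i : ℕ, MeasurableSet[past ((i * L + r : ℕ) : ℤ)] (C i))
    (hCfut : ∀ s t : ℕ, s < t → MeasurableSet[fut (((s * L + r : ℕ) : ℤ) + 1)] (C t))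
    (hCp : ∀ i, (ℙ (C i)).toReal = pR) :
    ∀ S : Finset ℕ, S.Nonempty →
      (ℙ (⋂ i ∈ S, C i)).toReal ≤ (1 + Ψ) ^ (S.card - 1) * pR ^ S.card := by
  have hpR : 0 ≤ pR := (hCp 0) ▸ ENNReal.toReal_nonneg
  intro S
  induction S using Finset.strongInduction with
  | _ S ih =>
    intro hne
    rcases eq_or_lt_of_le (Finset.one_le_card.mpr hne) with hcard | hcard
    · obtain ⟨t, rfl⟩ := Finset.card_eq_one.mp hcard.symm
      simp [hCp t, hpR]
    · set t := S.max' hne with ht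
      set S' := S.erase t with hS'
      have htS : t ∈ S := S.max'_mem hne
      have hS'card : S'.card = S.card - 1 := Finset.card_erase_of_mem htS
      have hS'ne : S'.Nonempty := by
        rw [← Finset.card_pos, hS'card]; omega
      set s := S'.max' hS'ne with hs
      have hsS' : s ∈ S' := S'.max'_mem hS'ne
      have hst : s < t := by
        have h1 : s ≤ t := S.le_max' s (Finset.mem_of_mem_erase hsS')
        have h2 : s ≠ t := Finset.ne_of_mem_erase hsS'
        exact lt_of_le_of_ne h1 h2
      have hins : insert t S' = S := Finset.insert_erase htS
      have hdecomp : ⋂ i ∈ S, C i = (⋂ i ∈ S', C i) ∩ C t := by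
        rw [← hins, Finset.set_biInter_insert, Set.inter_comm]
      have hA : MeasurableSet[past ((s * L + r : ℕ) : ℤ)] (⋂ i ∈ S', C i) := by
        refine Finset.measurableSet_biInter _ fun i hi => ?_
        have hile : i ≤ s := S'.le_max' i hi
        refine hpast_mono ?_ _ (hCpast i)
        have hmul : (i:ℤ) * L ≤ (s:ℤ) * L :=
          mul_le_mul_of_nonneg_right (by exact_mod_cast hile) (by positivity)
        push_cast
        linarith
      have hB := hCfut s t hst
      have hmain := hmix ((s * L + r : ℕ) : ℤ) _ _ hA hB
      rw [hdecomp]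
      have hIH := ih S' (Finset.erase_ssubset htS) hS'ne
      have hCt := hCp t
      calc (ℙ ((⋂ i ∈ S', C i) ∩ C t)).toReal
          ≤ (ℙ (⋂ i ∈ S', C i)).toReal * (ℙ (C t)).toReal * (1 + Ψ) := hmain
        _ ≤ ((1 + Ψ) ^ (S'.card - 1) * pR ^ S'.card) * pR * (1 + Ψ) := by
            rw [hCt]
            apply mul_le_mul_of_nonneg_right _ hΨ
            apply mul_le_mul_of_nonneg_right hIH hpR
        _ = (1 + Ψ) ^ (S'.card - 1 + 1) * pR ^ (S'.card + 1) := by ring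
        _ = (1 + Ψ) ^ (S.card - 1) * pR ^ S.card := by
            have h1 : S'.card - 1 + 1 = S.card - 1 := by omega
            have h2 : S'.card + 1 = S.card := by omega
            rw [h1, h2]

end AuxRho

set_option maxHeartbeats 2000000 in
/-- **Exponential decay of `‖ρ_{ω,n}‖_{L^q}` under upper ψ-mixing.** -/
theorem rho_norm_exponential_decay
    {Ω S : Type*} [MeasurableSpace Ω] [MeasurableSpace S]
    (ℙ : Measure Ω) [IsProbabilityMeasure ℙ]
    (σ σinv : Ω → Ω) (hσmp : MeasurePreserving σ ℙ ℙ) (hσerg : Ergodic σ ℙ)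
    (hσinv : Function.LeftInverse σinv σ ∧ Function.RightInverse σinv σ)
    -- the generating two-sided stationary process X
    (X : ℤ → Ω → S) (hXmeas : ∀ j, Measurable (X j))
    (hXshift : ∀ (j : ℤ) (ω : Ω), X j (σ ω) = X (j + 1) ω)
    (hXgen : (⨆ j : ℤ, MeasurableSpace.comap (X j) inferInstance) = ‹MeasurableSpace Ω›)
    -- the upper ψ-mixing coefficients
    (ψU : ℕ → ℝ)
    (hψU : ∀ (k : ℕ) (n : ℤ) (Aset Bset : Set Ω),
      MeasurableSet[⨆ (j : ℤ) (_ : j ≤ n), MeasurableSpace.comap (X j) inferInstance] Aset →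
      MeasurableSet[⨆ (j : ℤ) (_ : n + k ≤ j), MeasurableSpace.comap (X j) inferInstance] Bset →
      (ℙ (Aset ∩ Bset)).toReal ≤ (ℙ Aset).toReal * (ℙ Bset).toReal * (1 + ψU k))
    -- the function ρ : Ω → (0,1)
    (ρ : Ω → ℝ) (hρmeas : Measurable ρ) (hρ0 : ∀ ω, 0 < ρ ω) (hρ1 : ∀ ω, ρ ω < 1)
    (hρmean : ∫ ω, ρ ω ∂ℙ < 1)
    (hlimsup : limsup (fun k : ℕ => ψU k) atTop < 1 / (∫ ω, ρ ω ∂ℙ) - 1)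
    -- finite-block approximations of ρ
    (βr : ℕ → ℝ) (hβrpos : ∀ r, 0 < βr r) (hβr0 : Tendsto βr atTop (nhds 0))
    (ρr : ℕ → Ω → ℝ) (hρrpos : ∀ r ω, 0 < ρr r ω)
    (hρrmeas : ∀ r : ℕ,
      Measurable[⨆ (j : ℤ) (_ : |j| ≤ (r : ℤ)), MeasurableSpace.comap (X j) inferInstance]
        (ρr r))
    (hρrapprox : ∀ r : ℕ, eLpNorm (fun ω => ρ ω - ρr r ω) ⊤ ℙ ≤ ENNReal.ofReal (βr r)) :
    ∀ q : ℝ, 1 ≤ q → ∃ δ : ℝ, 0 < δ ∧ δ < 1 ∧ ∀ n : ℕ, 1 ≤ n →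
      eLpNorm (fun ω => ∏ j ∈ Finset.range n, ρ (σ^[j] ω)) (ENNReal.ofReal q) ℙ
        ≤ ENNReal.ofReal (δ ^ n) := by
  classical
  -- ambient measurability of the process σ-algebras
  have hamb : ∀ j : ℤ, MeasurableSpace.comap (X j) inferInstance ≤ ‹MeasurableSpace Ω› :=
    fun j => (hXmeas j).comap_le
  -- the mean of ρ
  have hρInt : Integrable ρ ℙ := by
    refine Integrable.mono' (integrable_const 1) hρmeas.aestronglyMeasurable ?_
    exact Filter.Eventually.of_forall fun ω => by
      rw [Real.norm_eq_abs, abs_of_pos (hρ0 ω)]; exact (hρ1 ω).le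
  have hθpos : 0 < ∫ ω, ρ ω ∂ℙ := by
    rw [integral_pos_iff_support_of_nonneg (fun ω => (hρ0 ω).le) hρInt]
    have : Function.support ρ = Set.univ := by
      ext ω; simp [Function.support, (hρ0 ω).ne']
    rw [this]
    simp
  have hlin : ∫⁻ ω, ENNReal.ofReal (ρ ω) ∂ℙ = ENNReal.ofReal (∫ ω, ρ ω ∂ℙ) :=
    (ofReal_integral_eq_lintegral_ofReal hρInt
      (Filter.Eventually.of_forall fun ω => (hρ0 ω).le)).symm
  -- ψU 1 is at least 0
  set Ψ := ψU 1 with hΨdef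
  have hΨ1 : (1 : ℝ) ≤ 1 + Ψ := by
    have := hψU 1 0 Set.univ Set.univ MeasurableSet.univ MeasurableSet.univ
    simpa using this
  have hΨpos : (0 : ℝ) < 1 + Ψ := lt_of_lt_of_le one_pos hΨ1
  set ε : ℝ := 1 / (8 * (1 + Ψ)) with hεdef
  have hεpos : 0 < ε := by positivity
  -- choose a' < 1 with ℙ {a' < ρ} ≤ ε
  obtain ⟨a', ha'0, ha'1, ha'ε⟩ :
      ∃ a' : ℝ, 0 ≤ a' ∧ a' < 1 ∧ ℙ {ω | a' < ρ ω} ≤ ENNReal.ofReal ε := by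
    set sfun : ℕ → Set Ω := fun i => {ω | 1 - 1/(i+1 : ℝ) < ρ ω} with hsdef
    have hsm : ∀ i, MeasurableSet (sfun i) := fun i => measurableSet_lt measurable_const hρmeas
    have hanti : Antitone sfun := by
      intro i j hij ω hω
      have h1 : (1 : ℝ)/(j+1) ≤ 1/(i+1) := by
        apply one_div_le_one_div_of_le (by positivity)
        exact_mod_cast Nat.succ_le_succ hij
      simp only [hsdef, Set.mem_setOf_eq] at hω ⊢
      exact lt_of_le_of_lt (show (1:ℝ) - 1/(i+1) ≤ 1 - 1/(j+1) by linarith) hω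
    have hint : ⋂ i, sfun i = ∅ := by
      ext ω
      simp only [Set.mem_iInter, Set.mem_empty_iff_false, iff_false, not_forall, hsdef,
        Set.mem_setOf_eq, not_lt]
      obtain ⟨i, hi⟩ := exists_nat_one_div_lt (show (0:ℝ) < 1 - ρ ω by linarith [hρ1 ω])
      exact ⟨i, by push_cast at hi ⊢; linarith⟩
    have htend := tendsto_measure_iInter_atTop (μ := ℙ)
      (fun i => (hsm i).nullMeasurableSet) hanti ⟨0, measure_ne_top _ _⟩
    rw [hint] at htend
    simp only [measure_empty] at htend
    have hev := htend.eventually_lt_const (show (0 : ENNReal) < ENNReal.ofReal ε from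
      ENNReal.ofReal_pos.mpr hεpos)
    obtain ⟨i, hi⟩ := hev.exists
    simp only [Function.comp_apply] at hi
    refine ⟨1 - 1/(i+1 : ℝ), ?_, ?_, hi.le⟩
    · have h2 : (1:ℝ)/(i+1) ≤ 1 := by
        apply div_le_one_of_le₀
        · have : (0:ℝ) ≤ (i:ℝ) := Nat.cast_nonneg i
          linarith
        · positivity
      linarith
    · have h2 : (0:ℝ) < 1/(i+1) := by positivity
      linarith
  -- choose r with βr r small
  obtain ⟨r, hrβ⟩ : ∃ r : ℕ, βr r < (1 - a')/4 := by
    have : ∀ᶠ r in atTop, βr r < (1 - a')/4 :=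
      hβr0.eventually (gt_mem_nhds (show (0:ℝ) < (1-a')/4 by linarith))
    exact this.exists
  set β : ℝ := βr r with hβdef
  have hβpos : 0 < β := hβrpos r
  -- the a.e. approximation
  have hae : ∀ᵐ ω ∂ℙ, |ρ ω - ρr r ω| ≤ β := by
    have h1 : ∀ᵐ ω ∂ℙ, (‖ρ ω - ρr r ω‖₊ : ℝ≥0∞) ≤ ENNReal.ofReal β := by
      refine (ae_le_eLpNormEssSup (f := fun ω => ρ ω - ρr r ω)).mono fun ω hω => (show (‖ρ ω - ρr r ω‖₊ : ℝ≥0∞) ≤ _ from hω).trans ?_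
      rw [← eLpNorm_exponent_top]
      exact hρrapprox r
    refine h1.mono fun ω hω => ?_
    rw [← Real.norm_eq_abs]
    rw [← enorm_eq_nnnorm, ← ofReal_norm] at hω
    exact (ENNReal.ofReal_le_ofReal_iff hβpos.le).mp hω
  have hρrA : Measurable (ρr r) :=
    (hρrmeas r).mono (iSup_le fun j => iSup_le fun _ => hamb j) le_rfl
  set a'' : ℝ := a' + β with ha''def
  set a : ℝ := a' + 2*β with hadef
  have ha1 : a < 1 := by rw [hadef]; linarith
  have ha0 : 0 < a := by rw [hadef]; linarith
  set Ac : Set Ω := {ω | a'' < ρr r ω} with hAcdef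
  have hAcm : MeasurableSet Ac := measurableSet_lt measurable_const hρrA
  have hAcblk : MeasurableSet[⨆ (j : ℤ) (_ : |j| ≤ (r : ℤ)),
      MeasurableSpace.comap (X j) inferInstance] Ac :=
    measurableSet_lt measurable_const (hρrmeas r)
  set pR : ℝ := (ℙ Ac).toReal with hpRdef
  have hpR0 : 0 ≤ pR := ENNReal.toReal_nonneg
  have hpRle : pR ≤ ε := by
    have hsub : ∀ᵐ ω ∂ℙ, ω ∈ Ac → ω ∈ {ω | a' < ρ ω} := by
      refine hae.mono fun ω hω hmem => ?_
      have h1 : ρr r ω - ρ ω ≤ β := by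
        have := abs_le.mp hω; linarith [this.1]
      have h2 : a'' < ρr r ω := hmem
      show a' < ρ ω
      rw [ha''def] at h2
      linarith
    have h2 : ℙ Ac ≤ ℙ {ω | a' < ρ ω} := measure_mono_ae hsub
    exact ENNReal.toReal_le_of_le_ofReal hεpos.le (h2.trans ha'ε)
  -- block length
  set L : ℕ := 2*r + 2 with hLdef
  have hLpos : 0 < L := by omega
  have hCp : ∀ i : ℕ, (ℙ (σ^[i*L] ⁻¹' Ac)).toReal = pR := fun i => by
    rw [(hσmp.iterate (i*L)).measure_preimage hAcm.nullMeasurableSet]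
  have hCm : ∀ i : ℕ, MeasurableSet (σ^[i*L] ⁻¹' Ac) :=
    fun i => (hσmp.measurable.iterate (i*L)) hAcm
  -- past and future σ-algebras
  set past : ℤ → MeasurableSpace Ω := fun z =>
    ⨆ (j : ℤ) (_ : j ≤ z), MeasurableSpace.comap (X j) inferInstance with hpastdef
  set fut : ℤ → MeasurableSpace Ω := fun z =>
    ⨆ (j : ℤ) (_ : z ≤ j), MeasurableSpace.comap (X j) inferInstance with hfutdef
  have hpast_mono : Monotone past := by
    intro z₁ z₂ hz
    simp only [hpastdef]
    exact iSup_le fun j => iSup_le fun hj =>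
      le_iSup₂ (f := fun (j : ℤ) (_ : j ≤ z₂) =>
        MeasurableSpace.comap (X j) inferInstance) j (hj.trans hz)
  have hmix : ∀ (s : ℤ) (A B : Set Ω), MeasurableSet[past s] A → MeasurableSet[fut (s+1)] B →
      (ℙ (A ∩ B)).toReal ≤ (ℙ A).toReal * (ℙ B).toReal * (1 + Ψ) := by
    intro s A B hA hB
    have hB' : MeasurableSet[⨆ (j : ℤ) (_ : s + ((1:ℕ):ℤ) ≤ j),
        MeasurableSpace.comap (X j) inferInstance] B := by
      have h1 : s + ((1:ℕ):ℤ) = s + 1 := by norm_num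
      rw [h1]
      exact hB
    exact hψU 1 s A B hA hB'
  have hLz : (L:ℤ) = 2*(r:ℤ) + 2 := by rw [hLdef]; push_cast; ring
  have hCpast : ∀ i : ℕ, MeasurableSet[past ((i*L + r : ℕ) : ℤ)] (σ^[i*L] ⁻¹' Ac) := by
    intro i
    refine aux_shift_preimage σ X hXshift r (i*L) _ (fun j hj => ?_) hAcblk
    simp only [hpastdef]
    refine le_iSup₂ (f := fun (j' : ℤ) (_ : j' ≤ ((i*L + r : ℕ) : ℤ)) =>
      MeasurableSpace.comap (X j') inferInstance) (j + ((i*L : ℕ) : ℤ)) ?_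
    have h2 := (abs_le.mp hj).2
    push_cast
    linarith
  have hCfut : ∀ s t : ℕ, s < t →
      MeasurableSet[fut (((s*L + r : ℕ) : ℤ) + 1)] (σ^[t*L] ⁻¹' Ac) := by
    intro s t hst
    refine aux_shift_preimage σ X hXshift r (t*L) _ (fun j hj => ?_) hAcblk
    simp only [hfutdef]
    refine le_iSup₂ (f := fun (j' : ℤ) (_ : ((s*L + r : ℕ) : ℤ) + 1 ≤ j') =>
      MeasurableSpace.comap (X j') inferInstance) (j + ((t*L : ℕ) : ℤ)) ?_
    have h1 := (abs_le.mp hj).1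
    have h2 : ((s:ℤ) + 1) * (L:ℤ) ≤ (t:ℤ) * (L:ℤ) := by
      apply mul_le_mul_of_nonneg_right _ (by positivity)
      exact_mod_cast hst
    push_cast
    push_cast at h2
    linarith [hLz]
  have key := aux_iter_mix ℙ past fut Ψ pR (by linarith)
    (fun i => σ^[i*L] ⁻¹' Ac) L r hmix hpast_mono hCpast hCfut hCp
  -- γ
  set γ : ℝ := max a (1/2) with hγdef
  have hγ0 : 0 < γ := lt_of_lt_of_le (by norm_num) (le_max_right _ _)
  have hγ1 : γ < 1 := max_lt ha1 (by norm_num)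
  have hγhalf : (1/2 : ℝ) ≤ γ := le_max_right _ _
  have hεmul : 4 * (1+Ψ) * pR ≤ 1/2 := by
    have h1 : 4 * (1+Ψ) * pR ≤ 4 * (1+Ψ) * ε :=
      mul_le_mul_of_nonneg_left hpRle (by positivity)
    have h2 : 4 * (1+Ψ) * ε = 1/2 := by
      rw [hεdef]; field_simp; ring
    linarith
  -- the a.e. approximation along the orbit
  have haeall : ∀ᵐ ω ∂ℙ, ∀ i : ℕ, |ρ (σ^[i] ω) - ρr r (σ^[i] ω)| ≤ β := by
    rw [ae_all_iff]
    intro i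
    have hmp := hσmp.iterate i
    have hDm : MeasurableSet {ω | |ρ ω - ρr r ω| ≤ β} :=
      measurableSet_le (hρmeas.sub hρrA).abs measurable_const
    have h2 : ∀ᵐ ω ∂(Measure.map (σ^[i]) ℙ), |ρ ω - ρr r ω| ≤ β := by
      rwa [hmp.map_eq]
    exact (ae_map_iff hmp.measurable.aemeasurable hDm).mp h2
  -- main per-n estimate
  have keyn : ∀ n : ℕ, 1 ≤ n →
      ∫⁻ ω, ENNReal.ofReal (∏ j ∈ Finset.range n, ρ (σ^[j] ω)) ∂ℙ
        ≤ ENNReal.ofReal (4 * γ ^ (n / (2*L))) := by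
    intro n hn
    obtain ⟨x, hx⟩ : ∃ x : ℕ, x = (n-1)/L := ⟨_, rfl⟩
    obtain ⟨m, hm⟩ : ∃ m : ℕ, m = x + 1 := ⟨_, rfl⟩
    obtain ⟨h, hh⟩ : ∃ h : ℕ, h = (m+1)/2 := ⟨_, rfl⟩
    obtain ⟨e, he⟩ : ∃ e : ℕ, e = m/2 := ⟨_, rfl⟩
    have hm1 : 1 ≤ m := by omega
    have hf1 : (m-1)*L ≤ n-1 := by
      have := Nat.div_mul_le_self (n-1) L
      have hm' : m - 1 = (n-1)/L := by omega
      rw [hm']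
      exact this
    have hhe : e ≤ h := by omega
    have hm2h : m ≤ 2*h := by omega
    have hh1 : 1 ≤ h := by omega
    have hhm : h ≤ m := by omega
    have hlow : e ≤ m - h + 1 := by omega
    have hw : n/(2*L) ≤ e + 1 := by
      have d1 : x/2 = (n-1)/(2*L) := by rw [hx, Nat.div_div_eq_div_mul, mul_comm]
      have d2 : n/(2*L) ≤ ((n-1) + 2*L)/(2*L) := Nat.div_le_div_right (by omega)
      have d3 : ((n-1) + 2*L)/(2*L) = (n-1)/(2*L) + 1 := Nat.add_div_right _ (by omega)
      have d4 : x/2 ≤ e := by omega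
      calc n/(2*L) ≤ (n-1)/(2*L) + 1 := by rw [← d3]; exact d2
        _ = x/2 + 1 := by rw [d1]
        _ ≤ e + 1 := by omega
    set P := (Finset.range m).powersetCard h with hP
    set Eset := ⋃ Sf ∈ P, ⋂ i ∈ Sf, σ^[i*L] ⁻¹' Ac with hE
    have hEm : MeasurableSet Eset := by
      rw [hE]
      exact P.measurableSet_biUnion fun Sf _ => Sf.measurableSet_biInter fun i _ => hCm i
    have hchoose : (m.choose h : ℝ) ≤ 2^m := by
      have h1 : m.choose h ≤ 2^m := by
        calc m.choose h ≤ ∑ i ∈ Finset.range (m+1), m.choose i :=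
              Finset.single_le_sum (fun i _ => Nat.zero_le _) (Finset.mem_range.mpr (by omega))
          _ = 2^m := Nat.sum_range_choose m
      exact_mod_cast h1
    have hrealb : (m.choose h : ℝ) * ((1+Ψ)^(h-1) * pR^h) ≤ (1/2:ℝ)^e := by
      have t1 : (1+Ψ)^(h-1) ≤ (1+Ψ)^h := pow_le_pow_right₀ hΨ1 (by omega)
      have t2 : (2:ℝ)^m ≤ 4^h := by
        calc (2:ℝ)^m ≤ 2^(2*h) := pow_le_pow_right₀ (by norm_num) hm2h
          _ = 4^h := by rw [pow_mul]; norm_num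
      have t3 : (4*(1+Ψ)*pR)^h ≤ (1/2:ℝ)^h := pow_le_pow_left₀ (by positivity) hεmul h
      have t4 : ((1/2:ℝ))^h ≤ (1/2)^e := pow_le_pow_of_le_one (by norm_num) (by norm_num) hhe
      calc (m.choose h : ℝ) * ((1+Ψ)^(h-1) * pR^h)
          ≤ 2^m * ((1+Ψ)^h * pR^h) := by
            apply mul_le_mul hchoose (mul_le_mul_of_nonneg_right t1 (by positivity))
              (by positivity) (by positivity)
        _ ≤ 4^h * ((1+Ψ)^h * pR^h) := mul_le_mul_of_nonneg_right t2 (by positivity)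
        _ = (4*(1+Ψ)*pR)^h := by rw [mul_pow, mul_pow]; ring
        _ ≤ (1/2)^h := t3
        _ ≤ (1/2)^e := t4
    have hEb : ℙ Eset ≤ ENNReal.ofReal ((1/2:ℝ)^e) := by
      calc ℙ Eset ≤ ∑ Sf ∈ P, ℙ (⋂ i ∈ Sf, σ^[i*L] ⁻¹' Ac) := by
            rw [hE]; exact measure_biUnion_finset_le P _
        _ ≤ ∑ _Sf ∈ P, ENNReal.ofReal ((1+Ψ)^(h-1) * pR^h) := by
            refine Finset.sum_le_sum fun Sf hS => ?_
            rw [hP] at hS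
            obtain ⟨hsub, hcard⟩ := Finset.mem_powersetCard.mp hS
            have hSne : Sf.Nonempty := Finset.card_pos.mp (by omega)
            have hkey := key Sf hSne
            rw [hcard] at hkey
            calc ℙ (⋂ i ∈ Sf, σ^[i*L] ⁻¹' Ac)
                = ENNReal.ofReal ((ℙ (⋂ i ∈ Sf, σ^[i*L] ⁻¹' Ac)).toReal) :=
                  (ENNReal.ofReal_toReal (measure_ne_top ℙ _)).symm
              _ ≤ ENNReal.ofReal ((1+Ψ)^(h-1) * pR^h) := ENNReal.ofReal_le_ofReal hkey
        _ = P.card * ENNReal.ofReal ((1+Ψ)^(h-1) * pR^h) := by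
            rw [Finset.sum_const, nsmul_eq_mul]
        _ ≤ ENNReal.ofReal ((1/2:ℝ)^e) := by
            have hPcard : P.card = m.choose h := by
              rw [hP, Finset.card_powersetCard, Finset.card_range]
            rw [hPcard, ← ENNReal.ofReal_natCast (m.choose h),
              ← ENNReal.ofReal_mul (by positivity)]
            exact ENNReal.ofReal_le_ofReal hrealb
    have hIb : ∫⁻ ω, ENNReal.ofReal (∏ j ∈ Finset.range n, ρ (σ^[j] ω)) ∂ℙ
        ≤ ENNReal.ofReal (a^(m-h+1)) + ℙ Eset := by
      have hpt : ∀ᵐ ω ∂ℙ, ENNReal.ofReal (∏ j ∈ Finset.range n, ρ (σ^[j] ω))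
          ≤ ENNReal.ofReal (a^(m-h+1)) + Eset.indicator 1 ω := by
        refine haeall.mono fun ω hω => ?_
        by_cases hωE : ω ∈ Eset
        · rw [Set.indicator_of_mem hωE]
          have hb : ENNReal.ofReal (∏ j ∈ Finset.range n, ρ (σ^[j] ω)) ≤ 1 := by
            rw [← ENNReal.ofReal_one]
            apply ENNReal.ofReal_le_ofReal
            exact Finset.prod_le_one (fun j _ => (hρ0 _).le) (fun j _ => (hρ1 _).le)
          simp only [Pi.one_apply]
          exact le_add_left hb
        · rw [Set.indicator_of_notMem hωE, add_zero]
          apply ENNReal.ofReal_le_ofReal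
          set bad := (Finset.range m).filter (fun i => σ^[i*L] ω ∈ Ac) with hbad
          have hbadlt : bad.card < h := by
            by_contra hc
            push_neg at hc
            obtain ⟨T, hTsub, hTcard⟩ := Finset.exists_subset_card_eq hc
            apply hωE
            rw [hE]
            refine Set.mem_iUnion₂.mpr ⟨T, ?_, ?_⟩
            · rw [hP]
              exact Finset.mem_powersetCard.mpr
                ⟨hTsub.trans (by rw [hbad]; exact Finset.filter_subset _ _), hTcard⟩
            · refine Set.mem_iInter₂.mpr fun i hi => ?_
              have := hTsub hi
              rw [hbad] at this
              exact (Finset.mem_filter.mp this).2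
          set good := (Finset.range m).filter (fun i => σ^[i*L] ω ∉ Ac) with hgood
          have hsum : bad.card + good.card = m := by
            rw [hbad, hgood, Finset.card_filter_add_card_filter_not,
              Finset.card_range]
          have hgoodcard : m - h + 1 ≤ good.card := by omega
          have hTsub2 : good.image (· * L) ⊆ Finset.range n := by
            intro x hx
            obtain ⟨i, hi, rfl⟩ := Finset.mem_image.mp hx
            rw [hgood] at hi
            have him : i < m := Finset.mem_range.mp (Finset.mem_filter.mp hi).1
            have hile : i * L ≤ (m-1) * L := Nat.mul_le_mul_right L (by omega)
            exact Finset.mem_range.mpr (by omega)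
          calc ∏ j ∈ Finset.range n, ρ (σ^[j] ω)
              ≤ ∏ j ∈ good.image (· * L), ρ (σ^[j] ω) := by
                rw [← Finset.prod_sdiff hTsub2]
                have hone : ∏ j ∈ Finset.range n \ good.image (· * L), ρ (σ^[j] ω) ≤ 1 :=
                  Finset.prod_le_one (fun j _ => (hρ0 _).le) (fun j _ => (hρ1 _).le)
                have hnn : 0 ≤ ∏ j ∈ good.image (· * L), ρ (σ^[j] ω) :=
                  Finset.prod_nonneg fun j _ => (hρ0 _).le
                exact mul_le_of_le_one_left hnn hone
            _ = ∏ i ∈ good, ρ (σ^[i*L] ω) :=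
                Finset.prod_image (fun i _ j _ hij => Nat.eq_of_mul_eq_mul_right hLpos hij)
            _ ≤ ∏ _i ∈ good, a := by
                refine Finset.prod_le_prod (fun i _ => (hρ0 _).le) (fun i hi => ?_)
                rw [hgood] at hi
                have hnm : σ^[i*L] ω ∉ Ac := (Finset.mem_filter.mp hi).2
                have h3 : ρr r (σ^[i*L] ω) ≤ a'' := not_lt.mp hnm
                have h4 := (abs_le.mp (hω (i*L))).2
                rw [hadef]
                rw [ha''def] at h3
                linarith
            _ = a ^ good.card := Finset.prod_const a
            _ ≤ a ^ (m - h + 1) := pow_le_pow_of_le_one ha0.le ha1.le hgoodcard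
      calc ∫⁻ ω, ENNReal.ofReal (∏ j ∈ Finset.range n, ρ (σ^[j] ω)) ∂ℙ
          ≤ ∫⁻ ω, (ENNReal.ofReal (a^(m-h+1)) + Eset.indicator 1 ω) ∂ℙ :=
            lintegral_mono_ae hpt
        _ = ENNReal.ofReal (a^(m-h+1)) + ℙ Eset := by
            rw [lintegral_add_left measurable_const, lintegral_const, measure_univ, mul_one,
              lintegral_indicator_one hEm]
    refine hIb.trans ?_
    calc ENNReal.ofReal (a^(m-h+1)) + ℙ Eset
        ≤ ENNReal.ofReal (a^(m-h+1)) + ENNReal.ofReal ((1/2:ℝ)^e) := add_le_add_right hEb _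
      _ = ENNReal.ofReal (a^(m-h+1) + (1/2:ℝ)^e) :=
          (ENNReal.ofReal_add (by positivity) (by positivity)).symm
      _ ≤ ENNReal.ofReal (4 * γ ^ (n / (2*L))) := by
          apply ENNReal.ofReal_le_ofReal
          have u1 : a^(m-h+1) ≤ γ^e :=
            le_trans (pow_le_pow_of_le_one ha0.le ha1.le hlow)
              (pow_le_pow_left₀ ha0.le (le_max_left _ _) e)
          have u2 : (1/2:ℝ)^e ≤ γ^e := pow_le_pow_left₀ (by norm_num) hγhalf e
          have u3 : γ^(e+1) ≤ γ^(n/(2*L)) := pow_le_pow_of_le_one hγ0.le hγ1.le hw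
          have u4 : γ^e * (1/2) ≤ γ^(e+1) := by
            rw [pow_succ]
            exact mul_le_mul_of_nonneg_left hγhalf (pow_nonneg hγ0.le e)
          linarith
  -- choose k₂ with γ^k₂ < 1/4
  obtain ⟨k₂, hk₂⟩ := exists_pow_lt_of_lt_one (show (0:ℝ) < 1/4 by norm_num) hγ1
  set M : ℕ := 2*L with hM
  set N₀ : ℕ := 2*M*(k₂+1) with hN₀
  have hMpos : 0 < M := by omega
  have hN₀pos : 0 < N₀ := by positivity
  have hMr : (0:ℝ) < (M:ℝ) := by exact_mod_cast hMpos
  have hN₀r : (0:ℝ) < (N₀:ℝ) := by exact_mod_cast hN₀pos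
  set c : ℝ := γ ^ ((1:ℝ)/(2*M)) with hc
  set d : ℝ := (∫ ω, ρ ω ∂ℙ) ^ ((1:ℝ)/N₀) with hd
  have hc0 : 0 < c := Real.rpow_pos_of_pos hγ0 _
  have hc1 : c < 1 := Real.rpow_lt_one hγ0.le hγ1 (by positivity)
  have hd0 : 0 < d := Real.rpow_pos_of_pos hθpos _
  have hd1 : d < 1 := Real.rpow_lt_one hθpos.le hρmean (by positivity)
  set tfin : ℝ := max c d with htfin
  have ht0 : 0 < tfin := lt_of_lt_of_le hc0 (le_max_left _ _)
  have ht1 : tfin < 1 := max_lt hc1 hd1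
  have hcore : ∀ n : ℕ, 1 ≤ n →
      ∫⁻ ω, ENNReal.ofReal (∏ j ∈ Finset.range n, ρ (σ^[j] ω)) ∂ℙ
        ≤ ENNReal.ofReal (tfin ^ n) := by
    intro n hn
    by_cases hcase : N₀ ≤ n
    · refine (keyn n hn).trans (ENNReal.ofReal_le_ofReal ?_)
      -- 4 * γ^(n/(2L)) ≤ c^n ≤ tfin^n
      have e0 : M*(n/M) + n % M = n := Nat.div_add_mod n M
      have e0' : n % M < M := Nat.mod_lt _ hMpos
      have e1 : (n:ℝ) < (M:ℝ) * ((n/M : ℕ):ℝ) + M := by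
        exact_mod_cast (by omega : n < M*(n/M) + M)
      have e2 : 2*(M:ℝ)*((k₂:ℝ)+1) ≤ n := by
        have : N₀ ≤ n := hcase
        rw [hN₀] at this
        exact_mod_cast this
      have e3 : (n:ℝ)/(2*M) + k₂ ≤ ((n/M : ℕ):ℝ) := by
        have e4 : (n:ℝ) ≤ (((n/M : ℕ):ℝ) - k₂) * (2*M) := by
          have e4a : 2*((n:ℝ)) < 2*((M:ℝ) * ((n/M : ℕ):ℝ) + M) := by linarith
          ring_nf
          ring_nf at e4a e2
          linarith
        have e5 : (n:ℝ)/(2*M) ≤ ((n/M : ℕ):ℝ) - k₂ := by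
          rw [div_le_iff₀ (by positivity)]
          exact e4
        linarith
      have g1 : γ ^ (n/M) = γ ^ (((n/M : ℕ)):ℝ) := (Real.rpow_natCast γ _).symm
      have g2 : γ ^ (((n/M : ℕ)):ℝ) ≤ γ ^ ((n:ℝ)/(2*M) + k₂) :=
        Real.rpow_le_rpow_of_exponent_ge hγ0 hγ1.le e3
      have g3 : γ ^ ((n:ℝ)/(2*M) + (k₂:ℝ)) = γ ^ ((n:ℝ)/(2*M)) * γ ^ ((k₂:ℝ)) :=
        Real.rpow_add hγ0 _ _
      have g4 : γ ^ ((k₂:ℝ)) = γ ^ k₂ := Real.rpow_natCast γ k₂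
      have g5 : c^n = γ ^ ((n:ℝ)/(2*M)) := by
        rw [hc, ← Real.rpow_natCast (γ ^ ((1:ℝ)/(2*(M:ℝ)))) n, ← Real.rpow_mul hγ0.le]
        congr 1
        ring
      have g6 : (0:ℝ) < γ ^ ((n:ℝ)/(2*M)) := Real.rpow_pos_of_pos hγ0 _
      have g7 : γ ^ (n/(2*L)) = γ ^ (n/M) := by rw [hM]
      have g8 : γ ^ (n/M) ≤ γ ^ ((n:ℝ)/(2*M)) * γ ^ k₂ := by
        rw [g1, ← g4, ← g3]
        exact g2
      have g9 : 4 * γ ^ (n/(2*L)) ≤ c^n := by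
        rw [g7, g5]
        have g9a : γ ^ ((n:ℝ)/(2*M)) * γ ^ k₂ ≤ γ ^ ((n:ℝ)/(2*M)) * (1/4) :=
          mul_le_mul_of_nonneg_left hk₂.le g6.le
        linarith
      have g10 : c^n ≤ tfin^n := pow_le_pow_left₀ hc0.le (le_max_left c d) n
      linarith
    · -- small n : use the trivial bound by the mean of ρ
      push_neg at hcase
      have hsmall : ∫⁻ ω, ENNReal.ofReal (∏ j ∈ Finset.range n, ρ (σ^[j] ω)) ∂ℙ
          ≤ ENNReal.ofReal (∫ ω, ρ ω ∂ℙ) := by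
        have hpt : ∀ ω, ENNReal.ofReal (∏ j ∈ Finset.range n, ρ (σ^[j] ω))
            ≤ ENNReal.ofReal (ρ ω) := by
          intro ω
          apply ENNReal.ofReal_le_ofReal
          have h0r : ({0} : Finset ℕ) ⊆ Finset.range n :=
            Finset.singleton_subset_iff.mpr (Finset.mem_range.mpr (by omega))
          calc ∏ j ∈ Finset.range n, ρ (σ^[j] ω)
              ≤ ∏ j ∈ ({0} : Finset ℕ), ρ (σ^[j] ω) := by
                rw [← Finset.prod_sdiff h0r]
                have hone : ∏ j ∈ Finset.range n \ ({0} : Finset ℕ), ρ (σ^[j] ω) ≤ 1 :=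
                  Finset.prod_le_one (fun j _ => (hρ0 _).le) (fun j _ => (hρ1 _).le)
                have hnn : 0 ≤ ∏ j ∈ ({0} : Finset ℕ), ρ (σ^[j] ω) :=
                  Finset.prod_nonneg fun j _ => (hρ0 _).le
                exact mul_le_of_le_one_left hnn hone
            _ = ρ ω := by simp
        exact (lintegral_mono hpt).trans_eq hlin
      refine hsmall.trans (ENNReal.ofReal_le_ofReal ?_)
      have h1 : (∫ ω, ρ ω ∂ℙ) ≤ d^n := by
        have hdn : d^n = (∫ ω, ρ ω ∂ℙ) ^ ((1:ℝ)/N₀ * n) := by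
          rw [hd, ← Real.rpow_natCast ((∫ ω, ρ ω ∂ℙ) ^ ((1:ℝ)/(N₀:ℝ))) n,
            ← Real.rpow_mul hθpos.le]
        rw [hdn]
        nth_rewrite 1 [← Real.rpow_one (∫ ω, ρ ω ∂ℙ)]
        apply Real.rpow_le_rpow_of_exponent_ge hθpos hρmean.le
        rw [div_mul_eq_mul_div, one_mul, div_le_one hN₀r]
        exact_mod_cast hcase.le
      have h2 : d^n ≤ tfin^n := pow_le_pow_left₀ hd0.le (le_max_right c d) n
      linarith
  -- conclude for each q
  intro q hq
  refine ⟨tfin ^ ((1:ℝ)/q), Real.rpow_pos_of_pos ht0 _,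
    Real.rpow_lt_one ht0.le ht1 (by positivity), fun n hn => ?_⟩
  have hp0 : (ENNReal.ofReal q) ≠ 0 := by
    simp only [ne_eq, ENNReal.ofReal_eq_zero, not_le]
    linarith
  have hptop : (ENNReal.ofReal q) ≠ ⊤ := ENNReal.ofReal_ne_top
  rw [eLpNorm_eq_lintegral_rpow_enorm_toReal hp0 hptop]
  have hqt : (ENNReal.ofReal q).toReal = q := ENNReal.toReal_ofReal (by linarith)
  rw [hqt]
  have hptw : ∀ ω, ((‖∏ j ∈ Finset.range n, ρ (σ^[j] ω)‖₊ : ENNReal)) ^ q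
      ≤ ENNReal.ofReal (∏ j ∈ Finset.range n, ρ (σ^[j] ω)) := by
    intro ω
    have hnn : 0 ≤ ∏ j ∈ Finset.range n, ρ (σ^[j] ω) :=
      Finset.prod_nonneg fun j _ => (hρ0 _).le
    have h1 : ((‖∏ j ∈ Finset.range n, ρ (σ^[j] ω)‖₊ : ENNReal))
        = ENNReal.ofReal (∏ j ∈ Finset.range n, ρ (σ^[j] ω)) := by
      rw [← enorm_eq_nnnorm, ← ofReal_norm, Real.norm_eq_abs, abs_of_nonneg hnn]
    rw [h1]
    have h2 : ENNReal.ofReal (∏ j ∈ Finset.range n, ρ (σ^[j] ω)) ≤ 1 := by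
      rw [← ENNReal.ofReal_one]
      exact ENNReal.ofReal_le_ofReal
        (Finset.prod_le_one (fun j _ => (hρ0 _).le) (fun j _ => (hρ1 _).le))
    calc ENNReal.ofReal (∏ j ∈ Finset.range n, ρ (σ^[j] ω)) ^ q
        ≤ ENNReal.ofReal (∏ j ∈ Finset.range n, ρ (σ^[j] ω)) ^ (1:ℝ) :=
          ENNReal.rpow_le_rpow_of_exponent_ge h2 hq
      _ = ENNReal.ofReal (∏ j ∈ Finset.range n, ρ (σ^[j] ω)) := ENNReal.rpow_one _
  calc (∫⁻ ω, ((‖∏ j ∈ Finset.range n, ρ (σ^[j] ω)‖₊ : ENNReal)) ^ q ∂ℙ) ^ (1/q)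
      ≤ (ENNReal.ofReal (tfin ^ n)) ^ (1/q) := by
        apply ENNReal.rpow_le_rpow _ (by positivity)
        exact (lintegral_mono hptw).trans (hcore n hn)
    _ = ENNReal.ofReal ((tfin ^ n) ^ ((1:ℝ)/q)) := by
        rw [← ENNReal.ofReal_rpow_of_pos (by positivity)]
    _ = ENNReal.ofReal ((tfin ^ ((1:ℝ)/q)) ^ n) := by
        congr 1
        rw [← Real.rpow_natCast (tfin ^ ((1:ℝ)/q)) n, ← Real.rpow_mul ht0.le,
          ← Real.rpow_natCast tfin n, ← Real.rpow_mul ht0.le]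
        congr 1
        ring

end
end
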